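/- Let 0 < p < ∞ and Ω = (Ω_n)_n ⊂ [0,∞) with Ω_0 > 0. The functional ‖f‖_{d^∞(Ω,p)} = sup_n (Σ_{k=0}^n Ω_k)^{1/p} f*(n) is a norm on d^∞(Ω,p) if and only if Ω_n = 0 for all n ≥ 1. -/

import Mathlib

open MeasureTheory Set
open scoped ENNReal NNReal

/-- Nonincreasing rearrangement of a sequence (w.r.t. counting measure on ℕ). -/
noncomputable def rearrSeq (f : ℕ → ℝ) (n : ℕ) : ℝ≥0∞ :=
  sInf {s : ℝ≥0∞ | Measure.count {k : ℕ | s < ENNReal.ofReal |f k|} ≤ (n : ℝ≥0∞)}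

/-- The weak Lorentz sequence space functional `‖f‖_{d^∞(Ω,p)} = sup_n W_n^{1/p} f*(n)`. -/
noncomputable def wdNorm (Ω : ℕ → ℝ) (p : ℝ) (f : ℕ → ℝ) : ℝ≥0∞ :=
  ⨆ n : ℕ, ENNReal.ofReal ((∑ k ∈ Finset.range (n + 1), Ω k) ^ (1 / p)) * rearrSeq f n

private lemma rearrSeq_le {f : ℕ → ℝ} {n : ℕ} {s : ℝ≥0∞}
    (h : Measure.count {k : ℕ | s < ENNReal.ofReal |f k|} ≤ (n : ℝ≥0∞)) :
    rearrSeq f n ≤ s := sInf_le h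

private lemma count_le_of_subset {S : Set ℕ} {F : Finset ℕ} (h : S ⊆ ↑F) :
    Measure.count S ≤ (F.card : ℝ≥0∞) := by
  calc Measure.count S ≤ Measure.count ↑F := measure_mono h
    _ = F.card := Measure.count_apply_finset F

private lemma card_le_count {S : Set ℕ} {F : Finset ℕ} (h : ↑F ⊆ S) :
    (F.card : ℝ≥0∞) ≤ Measure.count S := by
  calc (F.card : ℝ≥0∞) = Measure.count ↑F := (Measure.count_apply_finset F).symm
    _ ≤ Measure.count S := measure_mono h

private lemma rearrSeq_zero (f : ℕ → ℝ) :
    rearrSeq f 0 = ⨆ k, ENNReal.ofReal |f k| := by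
  unfold rearrSeq
  have hset : {s : ℝ≥0∞ | Measure.count {k : ℕ | s < ENNReal.ofReal |f k|} ≤ ((0 : ℕ) : ℝ≥0∞)}
      = Ici (⨆ k, ENNReal.ofReal |f k|) := by
    ext s
    simp only [mem_setOf_eq, Nat.cast_zero, nonpos_iff_eq_zero, Measure.count_eq_zero_iff,
      Set.eq_empty_iff_forall_notMem, mem_setOf_eq, not_lt, mem_Ici, iSup_le_iff]
  rw [hset, csInf_Ici]

private lemma le_wdNorm (Ω : ℕ → ℝ) (p : ℝ) (f : ℕ → ℝ) (n : ℕ) :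
    ENNReal.ofReal ((∑ k ∈ Finset.range (n + 1), Ω k) ^ (1 / p)) * rearrSeq f n
      ≤ wdNorm Ω p f :=
  le_iSup (fun n => ENNReal.ofReal ((∑ k ∈ Finset.range (n + 1), Ω k) ^ (1 / p)) * rearrSeq f n) n

private lemma wdNorm_le {Ω : ℕ → ℝ} {p : ℝ} {f : ℕ → ℝ} {B : ℝ≥0∞}
    (h : ∀ n, ENNReal.ofReal ((∑ k ∈ Finset.range (n + 1), Ω k) ^ (1 / p)) * rearrSeq f n ≤ B) :
    wdNorm Ω p f ≤ B := iSup_le h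

/-- For `0 < p < ∞` and `Ω ⊆ [0,∞)` with `Ω₀ > 0`, the functional `‖·‖_{d^∞(Ω,p)}` is a
norm iff `Ωₙ = 0` for all `n ≥ 1`. -/
theorem stmt15 (p : ℝ) (hp : 0 < p) (Ω : ℕ → ℝ) (hΩ0 : 0 < Ω 0) (hΩ : ∀ n, 0 ≤ Ω n) :
    ((∀ f : ℕ → ℝ, wdNorm Ω p f = 0 → f = 0) ∧
     (∀ (f : ℕ → ℝ) (c : ℝ), wdNorm Ω p (c • f) = ENNReal.ofReal |c| * wdNorm Ω p f) ∧
     (∀ f g : ℕ → ℝ, wdNorm Ω p (f + g) ≤ wdNorm Ω p f + wdNorm Ω p g)) ↔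
    ∀ n : ℕ, 1 ≤ n → Ω n = 0 := by
  have hp' : 0 < 1 / p := by positivity
  constructor
  · rintro ⟨-, -, htri⟩
    by_contra hc
    push_neg at hc
    obtain ⟨n0, hn01, hΩn0⟩ := hc
    have hP : ∃ n, 1 ≤ n ∧ Ω n ≠ 0 := ⟨n0, hn01, hΩn0⟩
    set m := Nat.find hP with hm_def
    obtain ⟨hm1, hΩm⟩ := Nat.find_spec hP
    rw [← hm_def] at hm1 hΩm
    have hmin : ∀ k, 1 ≤ k → k < m → Ω k = 0 := by
      intro k h1 hk
      by_contra h
      exact Nat.find_min hP hk ⟨h1, h⟩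
    have hΩmpos : 0 < Ω m := lt_of_le_of_ne (hΩ m) (Ne.symm hΩm)
    have hWsmall : ∀ n, n < m → ∑ k ∈ Finset.range (n + 1), Ω k = Ω 0 := by
      intro n hn
      apply Finset.sum_eq_single_of_mem 0 (Finset.mem_range.2 (Nat.succ_pos n))
      intro b hb hb0
      have hb' : b < n + 1 := Finset.mem_range.1 hb
      exact hmin b (Nat.one_le_iff_ne_zero.2 hb0) (by omega)
    have hWm : ∑ k ∈ Finset.range (m + 1), Ω k = Ω 0 + Ω m := by
      rw [Finset.sum_range_succ]
      congr 1
      have h := hWsmall (m - 1) (by omega)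
      have he : m - 1 + 1 = m := by omega
      rwa [he] at h
    have hWmpos : 0 < ∑ k ∈ Finset.range (m + 1), Ω k := by rw [hWm]; linarith
    have hlt : Ω 0 < ∑ k ∈ Finset.range (m + 1), Ω k := by rw [hWm]; linarith
    set Wm : ℝ := ∑ k ∈ Finset.range (m + 1), Ω k with hWm_def
    set t : ℝ := (Ω 0 / Wm) ^ (1 / p) with ht_def
    have ht0 : 0 < t := Real.rpow_pos_of_pos (div_pos hΩ0 hWmpos) _
    have ht1 : t < 1 := Real.rpow_lt_one (le_of_lt (div_pos hΩ0 hWmpos))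
      ((div_lt_one hWmpos).2 hlt) hp'
    have htmul : Wm ^ (1 / p) * t = Ω 0 ^ (1 / p) := by
      rw [ht_def, ← Real.mul_rpow (le_of_lt hWmpos) (le_of_lt (div_pos hΩ0 hWmpos))]
      congr 1
      field_simp
    set f : ℕ → ℝ := fun k => if k < m then 1 else if k = m then t else 0 with hf
    set g : ℕ → ℝ := fun k => if k = 0 then t else if k ≤ m then 1 else 0 with hg
    have hfabs : ∀ k, |f k| ≤ 1 := by
      intro k
      rw [hf]
      simp only
      split_ifs
      · simp
      · rw [abs_of_nonneg ht0.le]; linarith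
      · simp
    have hgabs : ∀ k, |g k| ≤ 1 := by
      intro k
      rw [hg]
      simp only
      split_ifs
      · rw [abs_of_nonneg ht0.le]; linarith
      · simp
      · simp
    -- upper bounds for the three relevant distribution sets, for f
    have hf_top : {k : ℕ | ENNReal.ofReal 1 < ENNReal.ofReal |f k|} = ∅ := by
      ext k
      simp only [mem_setOf_eq, mem_empty_iff_false, iff_false, not_lt]
      exact ENNReal.ofReal_le_ofReal (hfabs k)
    have hg_top : {k : ℕ | ENNReal.ofReal 1 < ENNReal.ofReal |g k|} = ∅ := by
      ext k
      simp only [mem_setOf_eq, mem_empty_iff_false, iff_false, not_lt]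
      exact ENNReal.ofReal_le_ofReal (hgabs k)
    have hf_mid : {k : ℕ | ENNReal.ofReal t < ENNReal.ofReal |f k|} ⊆ ↑(Finset.range m) := by
      intro k hk
      simp only [mem_setOf_eq] at hk
      simp only [Finset.coe_range, mem_Iio]
      by_contra hkm
      push_neg at hkm
      have hle : |f k| ≤ t := by
        rw [hf]
        simp only
        split_ifs with h1 h2
        · exact absurd h1 hkm.not_gt
        · rw [abs_of_nonneg ht0.le]
        · rw [abs_zero]; exact ht0.le
      exact absurd hk (not_lt.2 (ENNReal.ofReal_le_ofReal hle))
    have hg_mid : {k : ℕ | ENNReal.ofReal t < ENNReal.ofReal |g k|} ⊆ ↑(Finset.Icc 1 m) := by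
      intro k hk
      simp only [mem_setOf_eq] at hk
      simp only [Finset.coe_Icc, mem_Icc]
      by_contra hkm
      push_neg at hkm
      have hle : |g k| ≤ t := by
        rw [hg]
        simp only
        split_ifs with h1 h2
        · rw [abs_of_nonneg ht0.le]
        · -- k ≠ 0, k ≤ m : then 1 ≤ k so m < k from hkm, contradiction with k ≤ m
          exfalso
          have hk1 : 1 ≤ k := Nat.one_le_iff_ne_zero.2 h1
          have := hkm hk1
          omega
        · rw [abs_zero]; exact ht0.le
      exact absurd hk (not_lt.2 (ENNReal.ofReal_le_ofReal hle))
    have hf_bot : {k : ℕ | (0 : ℝ≥0∞) < ENNReal.ofReal |f k|} ⊆ ↑(Finset.range (m + 1)) := by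
      intro k hk
      simp only [mem_setOf_eq] at hk
      simp only [Finset.coe_range, mem_Iio]
      by_contra hkm
      push_neg at hkm
      have hfk : f k = 0 := by
        rw [hf]; simp only; rw [if_neg (by omega), if_neg (by omega)]
      rw [hfk] at hk
      simp at hk
    have hg_bot : {k : ℕ | (0 : ℝ≥0∞) < ENNReal.ofReal |g k|} ⊆ ↑(Finset.range (m + 1)) := by
      intro k hk
      simp only [mem_setOf_eq] at hk
      simp only [Finset.coe_range, mem_Iio]
      by_contra hkm
      push_neg at hkm
      have hgk : g k = 0 := by
        rw [hg]; simp only; rw [if_neg (by omega), if_neg (by omega)]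
      rw [hgk] at hk
      simp at hk
    -- norm bounds for f and g
    have hbound : ∀ h : ℕ → ℝ, (∀ k, |h k| ≤ 1) →
        ({k : ℕ | ENNReal.ofReal t < ENNReal.ofReal |h k|} ⊆ ↑(Finset.range m) ∨
         {k : ℕ | ENNReal.ofReal t < ENNReal.ofReal |h k|} ⊆ ↑(Finset.Icc 1 m)) →
        {k : ℕ | (0 : ℝ≥0∞) < ENNReal.ofReal |h k|} ⊆ ↑(Finset.range (m + 1)) →
        wdNorm Ω p h ≤ ENNReal.ofReal (Ω 0 ^ (1 / p)) := by
      intro h habs hmid hbot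
      apply wdNorm_le
      intro n
      rcases lt_trichotomy n m with hn | hn | hn
      · have h1 : rearrSeq h n ≤ ENNReal.ofReal 1 := by
          apply rearrSeq_le
          have : {k : ℕ | ENNReal.ofReal 1 < ENNReal.ofReal |h k|} = ∅ := by
            ext k
            simp only [mem_setOf_eq, mem_empty_iff_false, iff_false, not_lt]
            exact ENNReal.ofReal_le_ofReal (habs k)
          rw [this]
          simp
        rw [hWsmall n hn]
        calc ENNReal.ofReal (Ω 0 ^ (1 / p)) * rearrSeq h n
            ≤ ENNReal.ofReal (Ω 0 ^ (1 / p)) * ENNReal.ofReal 1 := mul_le_mul_right h1 _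
          _ = ENNReal.ofReal (Ω 0 ^ (1 / p)) := by rw [ENNReal.ofReal_one, mul_one]
      · have hcount : Measure.count {k : ℕ | ENNReal.ofReal t < ENNReal.ofReal |h k|}
            ≤ (m : ℝ≥0∞) := by
          rcases hmid with hmid | hmid
          · calc Measure.count _ ≤ ((Finset.range m).card : ℝ≥0∞) := count_le_of_subset hmid
              _ = (m : ℝ≥0∞) := by rw [Finset.card_range]
          · calc Measure.count _ ≤ ((Finset.Icc 1 m).card : ℝ≥0∞) := count_le_of_subset hmid
              _ = (m : ℝ≥0∞) := by rw [Nat.card_Icc]; simp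
        have h1 : rearrSeq h n ≤ ENNReal.ofReal t := rearrSeq_le (by rw [hn]; exact hcount)
        rw [hn, ← hWm_def]
        calc ENNReal.ofReal (Wm ^ (1 / p)) * rearrSeq h m
            ≤ ENNReal.ofReal (Wm ^ (1 / p)) * ENNReal.ofReal t := mul_le_mul_right (hn ▸ h1) _
          _ = ENNReal.ofReal (Wm ^ (1 / p) * t) :=
              (ENNReal.ofReal_mul (Real.rpow_nonneg hWmpos.le _)).symm
          _ = ENNReal.ofReal (Ω 0 ^ (1 / p)) := by rw [htmul]
      · have h1 : rearrSeq h n ≤ 0 := by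
          apply rearrSeq_le (s := 0)
          calc Measure.count {k : ℕ | (0 : ℝ≥0∞) < ENNReal.ofReal |h k|}
              ≤ ((Finset.range (m + 1)).card : ℝ≥0∞) := count_le_of_subset hbot
            _ ≤ (n : ℝ≥0∞) := by
                rw [Finset.card_range]
                exact Nat.cast_le.2 hn
        calc ENNReal.ofReal ((∑ k ∈ Finset.range (n + 1), Ω k) ^ (1 / p)) * rearrSeq h n
            ≤ ENNReal.ofReal ((∑ k ∈ Finset.range (n + 1), Ω k) ^ (1 / p)) * 0 :=
              mul_le_mul_right h1 _
          _ = 0 := mul_zero _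
          _ ≤ _ := zero_le
    have hnormf : wdNorm Ω p f ≤ ENNReal.ofReal (Ω 0 ^ (1 / p)) :=
      hbound f hfabs (Or.inl hf_mid) hf_bot
    have hnormg : wdNorm Ω p g ≤ ENNReal.ofReal (Ω 0 ^ (1 / p)) :=
      hbound g hgabs (Or.inr hg_mid) hg_bot
    -- lower bound for f + g
    have hlow : ENNReal.ofReal (1 + t) ≤ rearrSeq (f + g) m := by
      refine le_sInf fun s hs => ?_
      by_contra hcon
      push_neg at hcon
      have hsub : ↑(Finset.range (m + 1)) ⊆ {k : ℕ | s < ENNReal.ofReal |(f + g) k|} := by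
        intro k hk
        simp only [Finset.coe_range, mem_Iio] at hk
        have hval : 1 + t ≤ |(f + g) k| := by
          have hfg : (f + g) k = f k + g k := rfl
          rw [hfg, hf, hg]
          simp only
          split_ifs <;>
            first
              | omega
              | (rw [abs_of_nonneg (by linarith)]; try linarith)
        simp only [mem_setOf_eq]
        exact lt_of_lt_of_le hcon (ENNReal.ofReal_le_ofReal hval)
      have hge : ((m + 1 : ℕ) : ℝ≥0∞) ≤ (m : ℝ≥0∞) := by
        calc ((m + 1 : ℕ) : ℝ≥0∞) = ((Finset.range (m + 1)).card : ℝ≥0∞) := by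
              rw [Finset.card_range]
          _ ≤ Measure.count {k : ℕ | s < ENNReal.ofReal |(f + g) k|} := card_le_count hsub
          _ ≤ (m : ℝ≥0∞) := hs
      have : m + 1 ≤ m := by exact_mod_cast hge
      omega
    have hkey : ENNReal.ofReal (Wm ^ (1 / p) * (1 + t)) ≤ ENNReal.ofReal (2 * Ω 0 ^ (1 / p)) := by
      calc ENNReal.ofReal (Wm ^ (1 / p) * (1 + t))
          = ENNReal.ofReal (Wm ^ (1 / p)) * ENNReal.ofReal (1 + t) :=
            ENNReal.ofReal_mul (Real.rpow_nonneg hWmpos.le _)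
        _ ≤ ENNReal.ofReal (Wm ^ (1 / p)) * rearrSeq (f + g) m := mul_le_mul_right hlow _
        _ ≤ wdNorm Ω p (f + g) := le_wdNorm Ω p (f + g) m
        _ ≤ wdNorm Ω p f + wdNorm Ω p g := htri f g
        _ ≤ ENNReal.ofReal (Ω 0 ^ (1 / p)) + ENNReal.ofReal (Ω 0 ^ (1 / p)) :=
            add_le_add hnormf hnormg
        _ = ENNReal.ofReal (2 * Ω 0 ^ (1 / p)) := by
            rw [← ENNReal.ofReal_add (Real.rpow_nonneg hΩ0.le _) (Real.rpow_nonneg hΩ0.le _)]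
            ring_nf
    have hreal : Wm ^ (1 / p) * (1 + t) ≤ 2 * Ω 0 ^ (1 / p) :=
      (ENNReal.ofReal_le_ofReal_iff (by positivity)).1 hkey
    have hexp : Wm ^ (1 / p) * (1 + t) = Wm ^ (1 / p) + Ω 0 ^ (1 / p) := by
      rw [mul_add, mul_one, htmul]
    have hmono : Ω 0 ^ (1 / p) < Wm ^ (1 / p) := Real.rpow_lt_rpow hΩ0.le hlt hp'
    linarith
  · intro hΩ1
    have hsum : ∀ n, ∑ k ∈ Finset.range (n + 1), Ω k = Ω 0 := by
      intro n
      apply Finset.sum_eq_single_of_mem 0 (Finset.mem_range.2 (Nat.succ_pos n))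
      intro b _ hb0
      exact hΩ1 b (Nat.one_le_iff_ne_zero.2 hb0)
    have hr0 : ∀ (f : ℕ → ℝ) (n : ℕ), rearrSeq f n ≤ rearrSeq f 0 := by
      intro f n
      apply sInf_le_sInf
      intro s hs
      simp only [mem_setOf_eq] at hs ⊢
      exact hs.trans (by exact_mod_cast Nat.cast_le.2 (Nat.zero_le n))
    have hwd : ∀ f : ℕ → ℝ, wdNorm Ω p f = ENNReal.ofReal (Ω 0 ^ (1 / p)) * rearrSeq f 0 := by
      intro f
      unfold wdNorm
      simp only [hsum]
      rw [← ENNReal.mul_iSup]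
      congr 1
      exact le_antisymm (iSup_le (hr0 f)) (le_iSup _ 0)
    have hCne : ENNReal.ofReal (Ω 0 ^ (1 / p)) ≠ 0 := by
      rw [ne_eq, ENNReal.ofReal_eq_zero, not_le]
      exact Real.rpow_pos_of_pos hΩ0 _
    refine ⟨?_, ?_, ?_⟩
    · intro f hf0
      rw [hwd, rearrSeq_zero] at hf0
      have h2 : (⨆ k, ENNReal.ofReal |f k|) = 0 := by
        rcases mul_eq_zero.1 hf0 with h | h
        · exact absurd h hCne
        · exact h
      funext k
      have hk : ENNReal.ofReal |f k| = 0 := le_antisymm (h2 ▸ le_iSup (fun k => ENNReal.ofReal |f k|) k) (zero_le)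
      rw [ENNReal.ofReal_eq_zero] at hk
      have : |f k| = 0 := le_antisymm hk (abs_nonneg _)
      simpa [abs_eq_zero] using this
    · intro f c
      rw [hwd, hwd, rearrSeq_zero, rearrSeq_zero]
      have habs : ∀ k, ENNReal.ofReal |(c • f) k| = ENNReal.ofReal |c| * ENNReal.ofReal |f k| := by
        intro k
        rw [Pi.smul_apply, smul_eq_mul, abs_mul, ENNReal.ofReal_mul (abs_nonneg c)]
      simp only [habs]
      rw [← ENNReal.mul_iSup]
      ring
    · intro f g
      rw [hwd, hwd, hwd, rearrSeq_zero, rearrSeq_zero, rearrSeq_zero, ← mul_add]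
      apply mul_le_mul_right
      refine iSup_le fun k => ?_
      calc ENNReal.ofReal |(f + g) k|
          ≤ ENNReal.ofReal (|f k| + |g k|) := ENNReal.ofReal_le_ofReal (abs_add_le _ _)
        _ = ENNReal.ofReal |f k| + ENNReal.ofReal |g k| :=
            ENNReal.ofReal_add (abs_nonneg _) (abs_nonneg _)
        _ ≤ _ := add_le_add (le_iSup (fun k => ENNReal.ofReal |f k|) k)
            (le_iSup (fun k => ENNReal.ofReal |g k|) k)
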